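/- Let d ≥ 2 be an integer and let α > 2/(d+1). For λ > 0 set u_λ = κ_d^{−1/(d+1)} λ^{1/(d+1)}. Then for every fixed h > 0, lim_{λ → ∞} φ_{λ,α,u_λ}(h) = 1. -/

import Mathlib

open MeasureTheory Real Filter

/-- `kappa j` is the Lebesgue volume of the unit ball in `ℝ^j`. -/
noncomputable def kappa (j : ℕ) : ℝ :=
  (volume (Metric.ball (0 : EuclideanSpace ℝ (Fin j)) 1)).toReal

/-- Normalized surface area `s₁` of a spherical cap of height `h` (equals `1` for `h > 2`). -/
noncomputable def s1 (d : ℕ) (h : ℝ) : ℝ :=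
  if h ≤ 2 then
    (((d : ℝ) - 1) * kappa (d - 1) / ((d : ℝ) * kappa d)) *
      ∫ θ in (0:ℝ)..(Real.arccos (1 - h)), (Real.sin θ) ^ (d - 2)
  else 1

/-- The function `g_{λ,α,u}(h)`. -/
noncomputable def gfun (lam al u h : ℝ) : ℝ :=
  min (max ((lam ^ al / u ^ 2 * h - (1 / 2) * (1 + lam ^ al) / u ^ 4 * h ^ 2) /
      (1 - h / u ^ 2)) 0) 2

/-- The density `φ_{λ,α,u}(h)`. -/
noncomputable def phi (d : ℕ) (lam al u h : ℝ) : ℝ :=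
  lam * (1 + lam ^ al) ^ d / u ^ (d + 1) / (kappa d * lam ^ ((d : ℝ) * al)) *
    s1 d (gfun lam al u h) * (1 - h / u ^ 2) ^ (d - 1)

lemma sin_pow_int (n : ℕ) : ∫ x in (0:ℝ)..π, Real.sin x ^ n
    = Real.sqrt π * Real.Gamma (((n:ℝ)+1)/2) / Real.Gamma ((n:ℝ)/2+1) := by
  induction n using Nat.twoStepInduction with
  | zero =>
      simp only [Nat.cast_zero, pow_zero]
      rw [intervalIntegral.integral_const]
      norm_num [Real.Gamma_one]
      rw [Real.Gamma_one_half_eq, Real.mul_self_sqrt Real.pi_pos.le]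
  | one =>
      simp only [Nat.cast_one, pow_one]
      rw [integral_sin]
      rw [show ((1:ℝ)+1)/2 = 1 by norm_num, Real.Gamma_one,
        show (1:ℝ)/2+1 = 1/2+1 by norm_num, Real.Gamma_add_one (by norm_num),
        Real.Gamma_one_half_eq]
      have h0 : Real.sqrt π ≠ 0 := (Real.sqrt_pos.mpr Real.pi_pos).ne'
      field_simp
      norm_num
  | more n ih _ =>
      have g1 : 0 < Real.Gamma (((n:ℝ)+1)/2) := Real.Gamma_pos_of_pos (by positivity)
      have g2 : 0 < Real.Gamma ((n:ℝ)/2+1) := Real.Gamma_pos_of_pos (by positivity)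
      have hn2 : ((n:ℝ)+2) ≠ 0 := by positivity
      have key : Real.sqrt π * Real.Gamma (((n:ℝ)+2+1)/2) / Real.Gamma (((n:ℝ)+2)/2+1)
          = ((n:ℝ)+1)/((n:ℝ)+2) *
            (Real.sqrt π * Real.Gamma (((n:ℝ)+1)/2) / Real.Gamma ((n:ℝ)/2+1)) := by
        rw [show ((n:ℝ)+2+1)/2 = ((n:ℝ)+1)/2 + 1 by ring,
          show ((n:ℝ)+2)/2+1 = ((n:ℝ)/2+1) + 1 by ring,
          Real.Gamma_add_one (s := ((n:ℝ)+1)/2) (by positivity),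
          Real.Gamma_add_one (s := (n:ℝ)/2+1) (by positivity)]
        field_simp
      rw [integral_sin_pow, ih]
      push_cast
      rw [key]
      simp [Real.sin_zero, Real.sin_pi, zero_pow]

lemma kappa_eq (j : ℕ) (hj : 0 < j) :
    kappa j = Real.sqrt π ^ j / Real.Gamma ((j:ℝ)/2+1) := by
  have : Nonempty (Fin j) := ⟨⟨0, hj⟩⟩
  have g : 0 < Real.Gamma ((j:ℝ)/2+1) := Real.Gamma_pos_of_pos (by positivity)
  rw [kappa, EuclideanSpace.volume_ball, Fintype.card_fin,
    ENNReal.ofReal_one, one_pow, one_mul, ENNReal.toReal_ofReal (by positivity)]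

lemma kappa_pos (j : ℕ) (hj : 0 < j) : 0 < kappa j := by
  rw [kappa_eq j hj]
  have g : 0 < Real.Gamma ((j:ℝ)/2+1) := Real.Gamma_pos_of_pos (by positivity)
  have : (0:ℝ) < Real.sqrt π := Real.sqrt_pos.mpr Real.pi_pos
  positivity

lemma s1_two (d : ℕ) (hd : 2 ≤ d) : s1 d 2 = 1 := by
  obtain ⟨n, rfl⟩ : ∃ n, d = n + 2 := ⟨d - 2, by omega⟩
  rw [s1, if_pos le_rfl, show (1:ℝ) - 2 = -1 by norm_num, Real.arccos_neg_one]
  have e1 : n + 2 - 1 = n + 1 := rfl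
  have e2 : n + 2 - 2 = n := rfl
  rw [e1, e2, sin_pow_int n, kappa_eq (n+1) (by omega), kappa_eq (n+2) (by omega)]
  push_cast
  have hs : (0:ℝ) < Real.sqrt π := Real.sqrt_pos.mpr Real.pi_pos
  have g1 : 0 < Real.Gamma (((n:ℝ)+1)/2) := Real.Gamma_pos_of_pos (by positivity)
  have g2 : 0 < Real.Gamma ((n:ℝ)/2+1) := Real.Gamma_pos_of_pos (by positivity)
  rw [show ((n:ℝ)+1)/2+1 = (((n:ℝ)+1)/2) + 1 by ring,
    show ((n:ℝ)+2)/2+1 = ((n:ℝ)/2+1) + 1 by ring,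
    Real.Gamma_add_one (s := ((n:ℝ)+1)/2) (by positivity),
    Real.Gamma_add_one (s := (n:ℝ)/2+1) (by positivity),
    pow_succ (Real.sqrt π) (n+1)]
  have hn1 : ((n:ℝ)+1) ≠ 0 := by positivity
  have hn2 : ((n:ℝ)+2) ≠ 0 := by positivity
  field_simp
  ring

/-- auxiliary: the scaling function. -/
noncomputable def uu (d : ℕ) (lam : ℝ) : ℝ :=
  kappa d ^ (-(1 : ℝ) / ((d : ℝ) + 1)) * lam ^ ((1 : ℝ) / ((d : ℝ) + 1))

/-- for `α > 2/(d+1)` and `u_λ = κ_d^{-1/(d+1)} λ^{1/(d+1)}`,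
`φ_{λ,α,u_λ}(h) → 1` for every fixed `h > 0`. -/
theorem phi_limit_supercritical (d : ℕ) (hd : 2 ≤ d) (al : ℝ)
    (hal : 2 / ((d : ℝ) + 1) < al) (h : ℝ) (hh : 0 < h) :
    Tendsto (fun lam : ℝ =>
        phi d lam al (kappa d ^ (-(1 : ℝ) / ((d : ℝ) + 1)) * lam ^ ((1 : ℝ) / ((d : ℝ) + 1))) h)
      atTop (nhds 1) := by
  show Tendsto (fun lam : ℝ => phi d lam al (uu d lam) h) atTop (nhds 1)
  have hd1 : (0:ℝ) < (d:ℝ) + 1 := by positivity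
  have hc : 0 < kappa d := kappa_pos d (by omega)
  have halpos : 0 < al := lt_trans (by positivity) hal
  -- u → ∞
  have hone : Tendsto (fun _ : ℝ => (1:ℝ)) atTop (nhds 1) := tendsto_const_nhds
  have hu : Tendsto (fun lam => uu d lam) atTop atTop :=
    Tendsto.const_mul_atTop (Real.rpow_pos_of_pos hc _)
      (tendsto_rpow_atTop (by positivity))
  have hu2 : Tendsto (fun lam => (uu d lam)^2) atTop atTop :=
    (tendsto_pow_atTop two_ne_zero).comp hu
  have hB : Tendsto (fun lam => h / (uu d lam)^2) atTop (nhds 0) :=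
    tendsto_const_nhds.div_atTop hu2
  have hupos : ∀ᶠ lam in atTop, 0 < uu d lam := hu.eventually_gt_atTop 0
  -- A = λ^α/u² → ∞
  have hA : Tendsto (fun lam => lam ^ al / (uu d lam)^2) atTop atTop := by
    have hexp : 0 < al - 2 / ((d:ℝ)+1) := sub_pos.mpr hal
    refine (Tendsto.const_mul_atTop
      (Real.rpow_pos_of_pos hc (2/((d:ℝ)+1))) (tendsto_rpow_atTop hexp)).congr' ?_
    filter_upwards [eventually_gt_atTop 0] with lam hlam
    have hu2e : (uu d lam)^2
        = kappa d ^ (-(2 / ((d:ℝ)+1))) * lam ^ (2/((d:ℝ)+1)) := by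
      rw [uu, mul_pow, ← Real.rpow_natCast (kappa d ^ (-(1:ℝ)/((d:ℝ)+1))) 2,
        ← Real.rpow_natCast (lam ^ ((1:ℝ)/((d:ℝ)+1))) 2,
        ← Real.rpow_mul hc.le, ← Real.rpow_mul hlam.le]
      push_cast
      rw [show -(1:ℝ)/((d:ℝ)+1) * 2 = -(2/((d:ℝ)+1)) by ring,
        show (1:ℝ)/((d:ℝ)+1) * 2 = 2/((d:ℝ)+1) by ring]
    rw [hu2e, Real.rpow_neg hc.le, Real.rpow_sub hlam]
    have h1 : lam ^ (2/((d:ℝ)+1)) ≠ 0 := (Real.rpow_pos_of_pos hlam _).ne'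
    have h2 : kappa d ^ (2/((d:ℝ)+1)) ≠ 0 := (Real.rpow_pos_of_pos hc _).ne'
    field_simp
  -- X → ∞
  have hX : Tendsto (fun lam =>
      (lam ^ al / (uu d lam) ^ 2 * h -
        (1 / 2) * (1 + lam ^ al) / (uu d lam) ^ 4 * h ^ 2) /
      (1 - h / (uu d lam) ^ 2)) atTop atTop := by
    have t1 : Tendsto (fun lam => lam ^ al / (uu d lam)^2 * h) atTop atTop :=
      hA.atTop_mul_const hh
    have t2 : Tendsto (fun lam => 1 - (h/(uu d lam)^2)/2) atTop (nhds 1) := by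
      have := hone.sub (hB.div_const 2)
      norm_num at this
      exact this
    have t3 := t1.atTop_mul_pos one_pos t2
    have t4 : Tendsto (fun lam => -((h/(uu d lam)^2)^2/2)) atTop (nhds 0) := by
      have := ((hB.pow 2).div_const 2).neg
      norm_num at this
      exact this
    have t5 : ∀ᶠ lam in atTop, (-1:ℝ) ≤ -((h/(uu d lam)^2)^2/2) :=
      t4.eventually (eventually_ge_nhds (by norm_num))
    have t6 := tendsto_atTop_add_right_of_le' atTop (-1 : ℝ) t3 t5
    have t7 : Tendsto (fun lam => (1 - h/(uu d lam)^2)⁻¹) atTop (nhds 1) := by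
      have := (hone.sub hB).inv₀ (by norm_num)
      norm_num at this
      exact this
    have t8 := t6.atTop_mul_pos one_pos t7
    refine t8.congr' ?_
    filter_upwards [hupos] with lam hul
    have hune : (uu d lam) ≠ 0 := hul.ne'
    rw [div_eq_mul_inv]
    congr 1
    field_simp
    ring
  -- eventually gfun = 2
  have hg2 : ∀ᶠ lam in atTop, gfun lam al (uu d lam) h = 2 := by
    filter_upwards [hX.eventually_ge_atTop 2] with lam h2
    rw [gfun, max_eq_left (le_trans (by norm_num) h2), min_eq_right h2]
  -- eventual closed form
  have key : (fun lam : ℝ => phi d lam al (uu d lam) h) =ᶠ[atTop]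
      fun lam => ((1 + lam ^ al) / lam ^ al) ^ d * (1 - h / (uu d lam)^2) ^ (d-1) := by
    filter_upwards [hg2, eventually_gt_atTop 0] with lam hg hlam
    have hual : 0 < lam ^ al := Real.rpow_pos_of_pos hlam al
    have hud : (uu d lam) ^ (d+1) = (kappa d)⁻¹ * lam := by
      rw [uu, mul_pow, ← Real.rpow_natCast (kappa d ^ (-(1:ℝ)/((d:ℝ)+1))) (d+1),
        ← Real.rpow_natCast (lam ^ ((1:ℝ)/((d:ℝ)+1))) (d+1),
        ← Real.rpow_mul hc.le, ← Real.rpow_mul hlam.le]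
      push_cast
      rw [show -(1:ℝ)/((d:ℝ)+1) * ((d:ℝ)+1) = -1 by field_simp,
        show (1:ℝ)/((d:ℝ)+1) * ((d:ℝ)+1) = 1 by field_simp,
        Real.rpow_neg_one, Real.rpow_one]
    have hld : lam ^ ((d:ℝ) * al) = (lam ^ al) ^ d := by
      rw [mul_comm, Real.rpow_mul hlam.le, Real.rpow_natCast]
    rw [phi, hg, s1_two d hd, mul_one, hud, hld, div_pow]
    have hκ : kappa d ≠ 0 := hc.ne'
    field_simp
  -- limit of the closed form
  have l1 : Tendsto (fun lam : ℝ => (1 + lam ^ al) / lam ^ al) atTop (nhds 1) := by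
    have hinv : Tendsto (fun lam : ℝ => (1:ℝ) / lam ^ al + 1) atTop (nhds 1) := by
      have := hone.div_atTop (tendsto_rpow_atTop halpos)
      have h2 := this.add hone
      norm_num at h2
      simpa [one_div] using h2
    refine hinv.congr' ?_
    filter_upwards [eventually_gt_atTop 0] with lam hlam
    have : lam ^ al ≠ 0 := (Real.rpow_pos_of_pos hlam al).ne'
    field_simp
  have l2 : Tendsto (fun lam => 1 - h / (uu d lam)^2) atTop (nhds 1) := by
    have := hone.sub hB
    norm_num at this
    exact this
  have hR : Tendsto (fun lam : ℝ =>
      ((1 + lam ^ al) / lam ^ al) ^ d * (1 - h / (uu d lam)^2) ^ (d-1))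
      atTop (nhds 1) := by
    have := (l1.pow d).mul (l2.pow (d-1))
    norm_num at this
    exact this
  exact hR.congr' key.symm
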